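/- Let $X$ be a noetherian topological space of finite Krull dimension, and let $C \subseteq X$ be a nonempty subset that contains a dense open subset of its closure $\overline{C}$. Then the topological Krull dimension of $\overline{C} \setminus C$ is strictly less than the topological Krull dimension of $\overline{C}$. -/

import Mathlib

open Order TopologicalSpace Topology Set

private lemma stmt7_aux_preimage {Z : Type*} [TopologicalSpace Z] {D : Set Z}
    (A : IrreducibleCloseds ↥D) :
    Subtype.val ⁻¹' (closure (Subtype.val '' (A : Set ↥D))) = (A : Set ↥D) := by
  apply subset_antisymm
  · obtain ⟨F, hF, hFA⟩ := isClosed_induced_iff.mp A.isClosed'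
    have hFA' : Subtype.val ⁻¹' F = (A : Set ↥D) := hFA
    have h1 : Subtype.val '' (A : Set ↥D) ⊆ F := by
      rw [← hFA']; exact Set.image_preimage_subset _ _
    have h2 := closure_minimal h1 hF
    intro x hx
    rw [← hFA']
    exact h2 hx
  · intro x hx
    exact subset_closure ⟨x, hx, rfl⟩

/-- The closure of the image of an irreducible closed subset of a subspace. -/
private def stmt7_fmap {Z : Type*} [TopologicalSpace Z] (D : Set Z)
    (A : IrreducibleCloseds ↥D) : IrreducibleCloseds Z where
  carrier := closure (Subtype.val '' (A : Set ↥D))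
  isIrreducible' := (A.isIrreducible'.image _ continuous_subtype_val.continuousOn).closure
  isClosed' := isClosed_closure

private lemma stmt7_fmap_strictMono {Z : Type*} [TopologicalSpace Z] (D : Set Z) :
    StrictMono (stmt7_fmap D) := by
  intro A B h
  rw [lt_iff_le_not_ge] at h ⊢
  obtain ⟨h1, h2⟩ := h
  constructor
  · show (stmt7_fmap D A : Set Z) ⊆ (stmt7_fmap D B : Set Z)
    exact closure_mono (Set.image_mono h1)
  · intro hc
    apply h2
    have hc' : (stmt7_fmap D B : Set Z) ⊆ (stmt7_fmap D A : Set Z) := hc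
    intro x hx
    have : (x : Z) ∈ closure (Subtype.val '' (B : Set ↥D)) := subset_closure ⟨x, hx, rfl⟩
    have := hc' this
    have := (stmt7_aux_preimage A) ▸ (show x ∈ Subtype.val ⁻¹'
      (closure (Subtype.val '' (A : Set ↥D))) from this)
    exact this

private lemma stmt7_fmap_subset {Z : Type*} [TopologicalSpace Z] {D F : Set Z}
    (hF : IsClosed F) (hDF : D ⊆ F) (A : IrreducibleCloseds ↥D) :
    (stmt7_fmap D A : Set Z) ⊆ F := by
  apply closure_minimal _ hF
  rintro _ ⟨x, _, rfl⟩
  exact hDF x.2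

private lemma stmt7_exists_gt {Y : Type*} [TopologicalSpace Y] [NoetherianSpace Y] {V : Set Y}
    (hVd : Dense V) (T : IrreducibleCloseds Y) (hTV : (T : Set Y) ⊆ Vᶜ) :
    ∃ W : IrreducibleCloseds Y, T < W := by
  obtain ⟨W, hWpre, hTW, hWmax⟩ := exists_preirreducible (T : Set Y) T.isIrreducible'.2
  have hWirr : IsIrreducible W := ⟨T.isIrreducible'.1.mono hTW, hWpre⟩
  have hWclosed : IsClosed W := by
    rw [← closure_eq_iff_isClosed]
    exact hWmax _ hWpre.closure subset_closure
  have hWmem : W ∈ irreducibleComponents Y :=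
    ⟨hWirr, fun u hu hle => (hWmax u hu.2 hle).le⟩
  obtain ⟨o, ho, hone, hoW⟩ :=
    NoetherianSpace.exists_isOpen_nonempty_subset_irreducibleComponent W hWmem
  obtain ⟨x, hxo, hxV⟩ := hVd.inter_open_nonempty o ho hone
  refine ⟨⟨W, hWirr, hWclosed⟩, lt_of_le_of_ne hTW ?_⟩
  intro h
  have : x ∈ (T : Set Y) := by rw [h]; exact hoW hxo
  exact hTV this hxV

theorem stmt7 {X : Type*} [TopologicalSpace X] [TopologicalSpace.NoetherianSpace X]
    (hfin : topologicalKrullDim X < ⊤)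
    (C : Set X) (hC : C.Nonempty)
    (hdense : ∃ U : Set X, U ⊆ C ∧
      IsOpen (Subtype.val ⁻¹' U : Set (closure C)) ∧
      Dense (Subtype.val ⁻¹' U : Set (closure C))) :
    topologicalKrullDim ↥(closure C \ C) < topologicalKrullDim ↥(closure C) := by
  obtain ⟨U, hUC, hVo, hVd⟩ := hdense
  set D : Set ↥(closure C) := Subtype.val ⁻¹' (closure C \ C) with hD
  -- transfer to the subspace `D` of `closure C`
  let e : ↥D ≃ₜ ↥(closure C \ C) :=
    { toFun := fun x => ⟨x.1.1, x.2⟩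
      invFun := fun y => ⟨⟨y.1, y.2.1⟩, y.2⟩
      left_inv := fun x => rfl
      right_inv := fun y => rfl
      continuous_toFun := Continuous.subtype_mk
        (continuous_subtype_val.comp continuous_subtype_val) _
      continuous_invFun := Continuous.subtype_mk
        (Continuous.subtype_mk continuous_subtype_val _) _ }
  rw [← IsHomeomorph.topologicalKrullDim_eq e e.isHomeomorph]
  -- basic facts about `closure C`
  have hYne : Nonempty ↥(closure C) := ⟨⟨hC.some, subset_closure hC.some_mem⟩⟩
  have hICYne : Nonempty (IrreducibleCloseds ↥(closure C)) :=
    ⟨⟨closure {Classical.arbitrary ↥(closure C)}, isIrreducible_singleton.closure,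
      isClosed_closure⟩⟩
  have h0 : 0 ≤ topologicalKrullDim ↥(closure C) := krullDim_nonneg
  have hle : topologicalKrullDim ↥(closure C) ≤ topologicalKrullDim X :=
    topologicalKrullDim_subspace_le X (closure C)
  have hYfin : topologicalKrullDim ↥(closure C) < ⊤ := lt_of_le_of_lt hle hfin
  -- extract a natural number dimension
  have h1 : topologicalKrullDim ↥(closure C) ≠ ⊥ := fun h => by simp [h] at h0
  have h2 : topologicalKrullDim ↥(closure C) ≠ ⊤ := hYfin.ne
  obtain ⟨m, hm⟩ : ∃ m : ℕ, topologicalKrullDim ↥(closure C) = (m : ℕ∞) := by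
    cases hd : topologicalKrullDim ↥(closure C) with
    | bot => exact absurd hd h1
    | coe n =>
      cases n with
      | top => exact absurd (by rw [hd]; rfl) h2
      | coe m => exact ⟨m, rfl⟩
  by_contra hcon
  push_neg at hcon
  by_cases hDne : Nonempty (IrreducibleCloseds ↥D)
  · -- a chain of length m inside D
    have hDV : D ⊆ (Subtype.val ⁻¹' U : Set ↥(closure C))ᶜ := by
      intro x hx hxV
      exact hx.2 (hUC hxV)
    obtain ⟨p, hp⟩ : ∃ p : LTSeries (IrreducibleCloseds ↥D), p.length = m := by
      have hm' : ((m : ℕ∞) : WithBot ℕ∞) ≤ krullDim (IrreducibleCloseds ↥D) := by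
        rw [← hm]; exact hcon
      cases m with
      | zero => exact ⟨RelSeries.singleton _ (Classical.arbitrary _), rfl⟩
      | succ k =>
        rw [krullDim_eq_iSup_height] at hm'
        have hlt : ((k : ℕ∞) : WithBot ℕ∞) <
            ⨆ a : IrreducibleCloseds ↥D, ((height a : ℕ∞) : WithBot ℕ∞) := by
          refine lt_of_lt_of_le ?_ hm'
          exact_mod_cast (by exact_mod_cast Nat.lt_succ_self k : ((k : ℕ∞)) < ((k+1 : ℕ)))
        obtain ⟨A, hA⟩ := lt_iSup_iff.mp hlt
        have hA' : (k : ℕ∞) < height A := by exact_mod_cast hA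
        have hA'' : ((k + 1 : ℕ) : ℕ∞) ≤ height A := by
          rw [Nat.cast_add, Nat.cast_one]
          exact Order.add_one_le_of_lt hA'
        obtain ⟨p, _, hp⟩ := exists_series_of_le_height A hA''
        exact ⟨p, hp⟩
    -- extend it by one step inside closure C
    have hTV : (stmt7_fmap D p.last : Set ↥(closure C)) ⊆
        (Subtype.val ⁻¹' U : Set ↥(closure C))ᶜ :=
      stmt7_fmap_subset hVo.isClosed_compl hDV _
    obtain ⟨W, hW⟩ := stmt7_exists_gt hVd _ hTV
    have hlast : (p.map (stmt7_fmap D) (stmt7_fmap_strictMono D)).last = stmt7_fmap D p.last :=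
      rfl
    let q := (p.map (stmt7_fmap D) (stmt7_fmap_strictMono D)).snoc W (hlast ▸ hW)
    have hq := LTSeries.length_le_krullDim q
    have hqlen : q.length = m + 1 := by
      show p.length + 0 + 1 = m + 1
      rw [hp]
    rw [hqlen] at hq
    rw [show krullDim (IrreducibleCloseds ↥(closure C)) = ((m : ℕ∞) : WithBot ℕ∞) from hm] at hq
    have : (m + 1 : ℕ) ≤ m := by exact_mod_cast hq
    omega
  · rw [not_nonempty_iff] at hDne
    have hbot : topologicalKrullDim ↥D = ⊥ := krullDim_eq_bot
    rw [hbot] at hcon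
    simp only [le_bot_iff] at hcon
    exact h1 hcon
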